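/- For the polynomial 1 - φ_i(T)/p, one has v_p(1 - φ_i(T)/p, 1/(p^i - p^(i-1))) = 0, and for every l ≥ 1, v_p(1 - φ_i(T)/p, 1/(p^l - p^(l-1))) > i - l - 1. -/

import Mathlib

open Polynomial Finset

/-- `φ_i(T) = 1 + (1+T)^(p^(i-1)) + ⋯ + (1+T)^((p-1)p^(i-1))`. -/
noncomputable def phiPoly (p i : ℕ) : Polynomial ℚ :=
  ∑ c ∈ Finset.range p, (1 + Polynomial.X) ^ (c * p ^ (i - 1))

/-- The Gauss valuation `v_p(f, s) = inf_j (v_p(a_j) + j·s)`. -/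
noncomputable def gaussVal (p : ℕ) (f : Polynomial ℚ) (s : ℝ) : ℝ :=
  sInf {v : ℝ | ∃ j ∈ f.support, v = (padicValRat p (f.coeff j) : ℝ) + (j : ℝ) * s}

noncomputable def nS (p i j : ℕ) : ℕ := ∑ c ∈ Finset.range p, (c * p ^ (i - 1)).choose j

lemma coeff_phi (p i j : ℕ) : (phiPoly p i).coeff j = (nS p i j : ℚ) := by
  simp [phiPoly, nS, Polynomial.finset_sum_coeff, Polynomial.coeff_one_add_X_pow]

lemma nS_zero (p i : ℕ) : nS p i 0 = p := by simp [nS]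

lemma nS_top (p i : ℕ) (hp : 1 ≤ p) : nS p i ((p-1) * p^(i-1)) = 1 := by
  have hq : 0 < p ^ (i-1) := pow_pos (by omega) _
  rw [nS, Finset.sum_eq_single (p-1)]
  · simp
  · intro c hc hne
    rw [Finset.mem_range] at hc
    exact Nat.choose_eq_zero_of_lt ((Nat.mul_lt_mul_right hq).mpr (by omega))
  · intro h; exact absurd (Finset.mem_range.mpr (by omega)) h

lemma nS_gt (p i j : ℕ) (hj : (p-1) * p^(i-1) < j) : nS p i j = 0 := by
  rw [nS]
  apply Finset.sum_eq_zero
  intro c hc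
  rw [Finset.mem_range] at hc
  exact Nat.choose_eq_zero_of_lt (lt_of_le_of_lt (Nat.mul_le_mul_right _ (by omega)) hj)

lemma p_dvd_nS (p i j : ℕ) (hp : p.Prime) (hi : 1 ≤ i) (hj : j ≠ (p-1) * p^(i-1)) :
    p ∣ nS p i j := by
  haveI : Fact p.Prime := ⟨hp⟩
  set q := p ^ (i-1) with hq
  -- polynomial over ZMod p
  have key : (∑ c ∈ Finset.range p, (1 + X : Polynomial (ZMod p)) ^ (c * q))
      = X ^ ((p-1) * q) := by
    have h1 : (1 + X : Polynomial (ZMod p)) ^ q = 1 + X ^ q := by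
      rw [hq, add_pow_char_pow, one_pow]
    have h2 : ∀ c, (1 + X : Polynomial (ZMod p)) ^ (c * q) = (1 + X ^ q) ^ c := by
      intro c; rw [mul_comm, pow_mul, h1]
    have h3 : (∑ c ∈ Finset.range p, (1 + X : Polynomial (ZMod p)) ^ (c * q)) * X ^ q
        = X ^ ((p-1) * q) * X ^ q := by
      calc (∑ c ∈ Finset.range p, (1 + X : Polynomial (ZMod p)) ^ (c * q)) * X ^ q
          = (∑ c ∈ Finset.range p, (1 + X ^ q : Polynomial (ZMod p)) ^ c) *
              ((1 + X ^ q) - 1) := by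
            rw [Finset.sum_congr rfl fun c _ => h2 c]; ring_nf
        _ = (1 + X ^ q : Polynomial (ZMod p)) ^ p - 1 := geom_sum_mul _ _
        _ = X ^ (q * p) := by rw [add_pow_char, one_pow, pow_mul]; ring
        _ = X ^ ((p-1) * q) * X ^ q := by
            rw [← pow_add]; congr 1
            have hp1 : p - 1 + 1 = p := Nat.succ_pred_eq_of_pos hp.pos
            calc q * p = q * ((p-1)+1) := by rw [hp1]
              _ = (p-1) * q + q := by ring
    exact mul_right_cancel₀ (pow_ne_zero _ X_ne_zero) h3
  have hcast : ((nS p i j : ZMod p)) = 0 := by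
    have := congrArg (fun f => Polynomial.coeff f j) key
    simp only [Polynomial.finset_sum_coeff, Polynomial.coeff_one_add_X_pow,
      Polynomial.coeff_X_pow] at this
    rw [nS, Nat.cast_sum, this, if_neg hj]
  exact (ZMod.natCast_eq_zero_iff _ _).mp hcast

lemma kummer_nS (p i j : ℕ) (hp : p.Prime) (hj : 1 ≤ j) :
    p ^ ((i-1) - padicValNat p j) ∣ nS p i j := by
  haveI : Fact p.Prime := ⟨hp⟩
  apply Finset.dvd_sum
  intro c hc
  rcases Nat.eq_zero_or_pos c with rfl | hc1
  · simp [Nat.choose_eq_zero_of_lt hj]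
  set q := p ^ (i-1) with hqdef
  rcases lt_or_ge (c*q) j with h | h
  · simp [Nat.choose_eq_zero_of_lt h]
  · have hC : 0 < (c*q).choose j := Nat.choose_pos h
    have hcq : 1 ≤ c * q := le_trans hj h
    have hid : c * q * (c*q - 1).choose (j-1) = (c*q).choose j * j := by
      have := Nat.add_one_mul_choose_eq (c*q - 1) (j - 1)
      rwa [Nat.sub_add_cancel hcq, Nat.sub_add_cancel hj] at this
    have hdvd : p ^ (i-1) ∣ (c*q).choose j * j := by
      rw [← hid]; exact Dvd.dvd.mul_right (Dvd.dvd.mul_left dvd_rfl c) _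
    have hle : i - 1 ≤ padicValNat p ((c*q).choose j) + padicValNat p j := by
      rw [← padicValNat.mul (by omega) (by omega)]
      exact (padicValNat_dvd_iff_le (by positivity)).mp hdvd
    exact (padicValNat_dvd_iff_le (by omega)).mpr (by omega)

/-- For the polynomial `1 - φ_i(T)/p`, one has `v_p(1 - φ_i/p, 1/φ(p^i)) = 0`, and for every
`l ≥ 1`, `v_p(1 - φ_i/p, 1/φ(p^l)) > i - l - 1`, where `φ(p^l) = p^l - p^(l-1)`. -/
theorem stmt_2 (p i : ℕ) (hp : p.Prime) (hodd : Odd p) (hi : 1 ≤ i) :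
    gaussVal p (1 - Polynomial.C (1 / (p : ℚ)) * phiPoly p i)
        (1 / ((p : ℝ) ^ i - (p : ℝ) ^ (i - 1))) = 0 ∧
    ∀ l : ℕ, 1 ≤ l →
      (i : ℝ) - (l : ℝ) - 1 <
        gaussVal p (1 - Polynomial.C (1 / (p : ℚ)) * phiPoly p i)
          (1 / ((p : ℝ) ^ l - (p : ℝ) ^ (l - 1))) := by
  haveI : Fact p.Prime := ⟨hp⟩
  set g : Polynomial ℚ := 1 - Polynomial.C (1 / (p : ℚ)) * phiPoly p i with hg
  have hp0 : (p : ℚ) ≠ 0 := Nat.cast_ne_zero.mpr hp.pos.ne'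
  set D : ℕ := (p - 1) * p ^ (i - 1) with hD
  have hD0 : 0 < D := by
    have := hp.one_lt
    exact Nat.mul_pos (by omega) (pow_pos (by omega) _)
  -- cast lemma
  have hcastl : ∀ l : ℕ, 1 ≤ l →
      (((p - 1) * p ^ (l - 1) : ℕ) : ℝ) = (p : ℝ) ^ l - (p : ℝ) ^ (l - 1) := by
    intro l hl
    have hpl : (p : ℝ) ^ (l - 1) * (p : ℝ) = (p : ℝ) ^ l := by
      rw [← pow_succ]; congr 1; omega
    push_cast [Nat.cast_sub hp.one_le]
    nlinarith [hpl]
  -- coefficients of g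
  have hcoeff : ∀ j, g.coeff j =
      (if j = 0 then (1 : ℚ) else 0) - (1 / (p : ℚ)) * nS p i j := by
    intro j
    rw [hg, Polynomial.coeff_sub, Polynomial.coeff_one, Polynomial.coeff_C_mul, coeff_phi]
  have hcoeff0 : g.coeff 0 = 0 := by
    rw [hcoeff]; simp [nS_zero, hp0]
  have hcoeffpos : ∀ j, 1 ≤ j → g.coeff j = -((nS p i j : ℚ) / p) := by
    intro j hj; rw [hcoeff, if_neg (by omega)]; ring
  have hsupp : ∀ j ∈ g.support, 1 ≤ j ∧ nS p i j ≠ 0 ∧ j ≤ D := by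
    intro j hj
    rw [Polynomial.mem_support_iff] at hj
    have h1 : 1 ≤ j := by
      by_contra h
      have hj0 : j = 0 := by omega
      exact hj (by rw [hj0]; exact hcoeff0)
    refine ⟨h1, ?_, ?_⟩
    · intro h; exact hj (by rw [hcoeffpos j h1, h]; simp)
    · by_contra h
      exact hj (by rw [hcoeffpos j h1, nS_gt p i j (by omega)]; simp)
  have hDsupp : D ∈ g.support := by
    rw [Polynomial.mem_support_iff, hcoeffpos D hD0, nS_top p i hp.one_le]
    simp [hp0]
  have hval : ∀ j, 1 ≤ j → nS p i j ≠ 0 →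
      padicValRat p (g.coeff j) = (padicValNat p (nS p i j) : ℤ) - 1 := by
    intro j h1 h2
    rw [hcoeffpos j h1, padicValRat.neg,
      padicValRat.div (by exact_mod_cast h2) hp0,
      padicValRat.of_nat, padicValRat.self hp.one_lt]
  -- key lower bound per support element, for any l ≥ 1
  have hkey : ∀ l : ℕ, 1 ≤ l → ∀ j ∈ g.support,
      (i : ℝ) - l - 1 < (padicValRat p (g.coeff j) : ℝ) +
        (j : ℝ) * (1 / ((p : ℝ) ^ l - (p : ℝ) ^ (l - 1))) := by
    intro l hl j hj
    obtain ⟨h1, h2, _h3⟩ := hsupp j hj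
    set v := padicValNat p (nS p i j) with hv
    set k := padicValNat p j with hk
    have hEpos : (0 : ℝ) < (p : ℝ) ^ l - (p : ℝ) ^ (l - 1) := by
      rw [← hcastl l hl]
      have := hp.one_lt
      exact_mod_cast Nat.mul_pos (by omega) (pow_pos (by omega) _)
    rw [hval j h1 h2]
    have hgcast : ((((padicValNat p (nS p i j) : ℤ) - 1) : ℤ) : ℝ) = (v : ℝ) - 1 := by
      rw [hv]; simp only [Int.cast_sub, Int.cast_natCast, Int.cast_one]
    rw [hgcast]
    -- fact 1 : i ≤ v + k + 1
    have hvk : i ≤ v + k + 1 := by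
      have := (padicValNat_dvd_iff_le h2).mp (kummer_nS p i j hp h1)
      omega
    -- fact 2 : p^k ≤ j
    have hpkj : (p : ℝ) ^ k ≤ (j : ℝ) := by
      exact_mod_cast Nat.le_of_dvd (by omega) pow_padicValNat_dvd
    -- main inequality :  ((k:ℝ) - l + 1) * E < p^k
    have hmain : ((k : ℝ) - l + 1) * ((p : ℝ) ^ l - (p : ℝ) ^ (l - 1)) < (p : ℝ) ^ k := by
      rcases lt_or_ge k l with hkl | hkl
      · have : (k : ℝ) - l + 1 ≤ 0 := by
          have : (k : ℝ) + 1 ≤ l := by exact_mod_cast hkl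
          linarith
        nlinarith [pow_pos (show (0:ℝ) < p from by exact_mod_cast hp.pos) k]
      · set m := k - (l - 1) with hm
        have hm1 : 1 ≤ m := by omega
        have hkm : k = (l - 1) + m := by omega
        have hcm : ((k : ℝ) - l + 1) = (m : ℝ) := by
          have h1' : (k : ℝ) = ((l - 1 : ℕ) : ℝ) + m := by rw [hkm]; push_cast; ring
          have h2' : ((l - 1 : ℕ) : ℝ) = (l : ℝ) - 1 := by
            rw [Nat.cast_sub hl]; norm_num
          rw [h1', h2']; ring
        have hpk : (p : ℝ) ^ k = (p : ℝ) ^ (l - 1) * (p : ℝ) ^ m := by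
          rw [hkm, pow_add]
        have hEl : (p : ℝ) ^ l - (p : ℝ) ^ (l - 1) = ((p : ℝ) - 1) * (p : ℝ) ^ (l - 1) := by
          have hpl : (p : ℝ) ^ (l - 1) * (p : ℝ) = (p : ℝ) ^ l := by
            rw [← pow_succ]; congr 1; omega
          nlinarith [hpl]
        have hbern : 1 + (m : ℝ) * ((p : ℝ) - 1) ≤ (p : ℝ) ^ m := by
          have hp1r : (1:ℝ) ≤ p := by exact_mod_cast hp.one_le
          have := one_add_mul_le_pow (a := (p : ℝ) - 1) (by linarith) m
          simpa using this
        have hq0 : (0 : ℝ) < (p : ℝ) ^ (l - 1) :=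
          pow_pos (by exact_mod_cast hp.pos) _
        rw [hcm, hpk, hEl]
        nlinarith [hbern, hq0]
    have hik : (i : ℝ) ≤ (v : ℝ) + k + 1 := by exact_mod_cast hvk
    have hjE : ((k : ℝ) - l + 1) < (j : ℝ) * (1 / ((p : ℝ) ^ l - (p : ℝ) ^ (l - 1))) := by
      rw [mul_one_div, lt_div_iff₀ hEpos]
      calc ((k : ℝ) - l + 1) * ((p : ℝ) ^ l - (p : ℝ) ^ (l - 1)) < (p : ℝ) ^ k := hmain
        _ ≤ (j : ℝ) := hpkj
    linarith
  -- the sets are finite and nonempty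
  constructor
  · -- part 1
    rw [gaussVal]
    set s : ℝ := 1 / ((p : ℝ) ^ i - (p : ℝ) ^ (i - 1)) with hs
    set S : Set ℝ := {v : ℝ | ∃ j ∈ g.support, v = (padicValRat p (g.coeff j) : ℝ) + (j : ℝ) * s}
      with hS
    have hEcast : ((D : ℕ) : ℝ) = (p : ℝ) ^ i - (p : ℝ) ^ (i - 1) := hcastl i hi
    have hEpos : (0 : ℝ) < (p : ℝ) ^ i - (p : ℝ) ^ (i - 1) := by
      rw [← hEcast]; exact_mod_cast hD0
    have hDval : (padicValRat p (g.coeff D) : ℝ) + (D : ℝ) * s = 0 := by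
      rw [hval D hD0 (by rw [nS_top p i hp.one_le]; exact one_ne_zero),
        nS_top p i hp.one_le]
      simp only [padicValNat.one, Nat.cast_zero, zero_sub]
      rw [hs, ← hEcast, mul_one_div, div_self (by exact_mod_cast hD0.ne')]
      push_cast; ring
    have hSfin : S.Finite := by
      have : S ⊆ (fun j : ℕ => (padicValRat p (g.coeff j) : ℝ) + (j : ℝ) * s) '' ↑g.support := by
        rintro v ⟨j, hj, rfl⟩; exact ⟨j, hj, rfl⟩
      exact Set.Finite.subset (Set.Finite.image _ g.support.finite_toSet) this
    refine le_antisymm (csInf_le hSfin.bddBelow ⟨D, hDsupp, hDval.symm⟩) ?_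
    refine le_csInf ⟨_, ⟨D, hDsupp, hDval.symm⟩⟩ ?_
    rintro v ⟨j, hj, rfl⟩
    obtain ⟨h1, h2, h3⟩ := hsupp j hj
    by_cases hjD : j = D
    · rw [hjD]; rw [hDval]
    · rw [hval j h1 h2]
      have hpd : 1 ≤ padicValNat p (nS p i j) := by
        have := p_dvd_nS p i j hp hi hjD
        exact (padicValNat_dvd_iff_le h2).mp (by simpa using this)
      have hjs : 0 ≤ (j : ℝ) * s := by
        rw [hs, mul_one_div]
        positivity
      have hv1 : (1 : ℝ) ≤ (padicValNat p (nS p i j) : ℝ) := by exact_mod_cast hpd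
      have hgcast : ((((padicValNat p (nS p i j) : ℤ) - 1) : ℤ) : ℝ)
          = (padicValNat p (nS p i j) : ℝ) - 1 := by
        simp only [Int.cast_sub, Int.cast_natCast, Int.cast_one]
      rw [hgcast]
      linarith
  · -- part 2
    intro l hl
    rw [gaussVal]
    set s : ℝ := 1 / ((p : ℝ) ^ l - (p : ℝ) ^ (l - 1)) with hs
    set S : Set ℝ := {v : ℝ | ∃ j ∈ g.support, v = (padicValRat p (g.coeff j) : ℝ) + (j : ℝ) * s}
      with hS
    have hSfin : S.Finite := by
      have : S ⊆ (fun j : ℕ => (padicValRat p (g.coeff j) : ℝ) + (j : ℝ) * s) '' ↑g.support := by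
        rintro v ⟨j, hj, rfl⟩; exact ⟨j, hj, rfl⟩
      exact Set.Finite.subset (Set.Finite.image _ g.support.finite_toSet) this
    have hSne : S.Nonempty := ⟨_, D, hDsupp, rfl⟩
    obtain ⟨j, hj, hjv⟩ := hSne.csInf_mem hSfin
    rw [hjv]
    exact hkey l hl j hj
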